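/- Let F', F'' be selfadjoint contractions on a Hilbert space K and N : M → K a bounded operator with F' - F'' = 2NN*. Then for every z ∈ ℂ \ ((-∞,-1] ∪ [1,∞)), the operator I_M + 2z N*(I_K - zF')⁻¹N is invertible with inverse I_M - 2z N*(I_K - zF'')⁻¹N; equivalently, -(I_M + 2z N*(I_K - zF')⁻¹N)⁻¹ = -I_M + 2z N*(I_K - zF'')⁻¹N. -/
import Mathlib

open ContinuousLinearMap

set_option maxHeartbeats 1000000

/-- If `F' - F'' = 2NN*` with `F', F''` selfadjoint contractions, then for
`z ∈ ℂ \ ((-∞,-1] ∪ [1,∞))` the operator `I + 2z N*(I - zF')⁻¹N` is invertible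
with inverse `I - 2z N*(I - zF'')⁻¹N`. -/
theorem stmt_4 {M K : Type*} [NormedAddCommGroup M] [InnerProductSpace ℂ M] [CompleteSpace M]
    [NormedAddCommGroup K] [InnerProductSpace ℂ K] [CompleteSpace K]
    (F' F'' : K →L[ℂ] K) (hF'sa : IsSelfAdjoint F') (hF''sa : IsSelfAdjoint F'')
    (hF'c : ‖F'‖ ≤ 1) (hF''c : ‖F''‖ ≤ 1)
    (N : M →L[ℂ] K) (hdiff : F' - F'' = (2 : ℂ) • (N ∘L N.adjoint))
    (z : ℂ) (hz : ¬(z.im = 0 ∧ 1 ≤ |z.re|))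
    (R' R'' : K →L[ℂ] K)
    (hR'1 : (1 - z • F') ∘L R' = 1) (hR'2 : R' ∘L (1 - z • F') = 1)
    (hR''1 : (1 - z • F'') ∘L R'' = 1) (hR''2 : R'' ∘L (1 - z • F'') = 1) :
    (1 + (2 * z) • (N.adjoint ∘L R' ∘L N)) ∘L (1 - (2 * z) • (N.adjoint ∘L R'' ∘L N)) = 1 ∧
    (1 - (2 * z) • (N.adjoint ∘L R'' ∘L N)) ∘L (1 + (2 * z) • (N.adjoint ∘L R' ∘L N)) = 1 := by
  have hmid : R' ∘L ((z • (F' - F'')) ∘L R'') = R' - R'' := by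
    have h1 : z • (F' - F'') = (1 - z • F'') - (1 - z • F') := by
      rw [smul_sub]; abel
    rw [h1, sub_comp, comp_sub, hR''1, ← comp_assoc, hR'2, one_def, comp_id, id_comp]
  have hmid2 : R'' ∘L ((z • (F' - F'')) ∘L R') = R' - R'' := by
    have h1 : z • (F' - F'') = (1 - z • F'') - (1 - z • F') := by
      rw [smul_sub]; abel
    rw [h1, sub_comp, comp_sub, ← comp_assoc, hR''2, hR'1, one_def, comp_id, id_comp]
  have hD : (2 * z) • (N ∘L N.adjoint) = z • (F' - F'') := by
    rw [mul_comm, mul_smul, ← hdiff]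
  have key : ((2 * z) • (N.adjoint ∘L R' ∘L N)) ∘L ((2 * z) • (N.adjoint ∘L R'' ∘L N))
      = (2 * z) • (N.adjoint ∘L R' ∘L N) - (2 * z) • (N.adjoint ∘L R'' ∘L N) := by
    rw [smul_comp, ← smul_sub]
    congr 1
    calc (N.adjoint ∘L R' ∘L N) ∘L ((2 * z) • (N.adjoint ∘L R'' ∘L N))
        = N.adjoint ∘L R' ∘L (((2 * z) • (N ∘L N.adjoint)) ∘L (R'' ∘L N)) := by
          simp only [comp_smul, smul_comp, comp_assoc]
      _ = N.adjoint ∘L ((R' ∘L ((z • (F' - F'')) ∘L R'')) ∘L N) := by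
          rw [hD]; simp only [comp_assoc]
      _ = N.adjoint ∘L R' ∘L N - N.adjoint ∘L R'' ∘L N := by
          rw [hmid, sub_comp, comp_sub]
  have key2 : ((2 * z) • (N.adjoint ∘L R'' ∘L N)) ∘L ((2 * z) • (N.adjoint ∘L R' ∘L N))
      = (2 * z) • (N.adjoint ∘L R' ∘L N) - (2 * z) • (N.adjoint ∘L R'' ∘L N) := by
    rw [smul_comp, ← smul_sub]
    congr 1
    calc (N.adjoint ∘L R'' ∘L N) ∘L ((2 * z) • (N.adjoint ∘L R' ∘L N))
        = N.adjoint ∘L R'' ∘L (((2 * z) • (N ∘L N.adjoint)) ∘L (R' ∘L N)) := by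
          simp only [comp_smul, smul_comp, comp_assoc]
      _ = N.adjoint ∘L ((R'' ∘L ((z • (F' - F'')) ∘L R')) ∘L N) := by
          rw [hD]; simp only [comp_assoc]
      _ = N.adjoint ∘L R' ∘L N - N.adjoint ∘L R'' ∘L N := by
          rw [hmid2, sub_comp, comp_sub]
  constructor
  · rw [add_comp, comp_sub, comp_sub, key, one_def, id_comp, id_comp, comp_id]
    abel
  · rw [sub_comp, comp_add, comp_add, key2, one_def, comp_id, comp_id, id_comp]
    abel
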